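/- arXiv:1312.5681 — 2 statements merged into one kernel-verified Lean document; each statement's English description precedes it below -/
import Mathlib

section
/- (Local linear convergence.) Let A and B be nonempty closed subsets of ℝⁿ and x* ∈ A ∩ B. Suppose A and B intersect 0-separably at x* with constant γ ∈ (0,2), and B is 0-Hölder regular with respect to A at x* with constant c < γ/2. Then there exists a neighborhood V of x* such that every sequence of alternating projections (a_k, b_k) between A and B that has at least one iterate in V converges R-linearly to a point b* ∈ A ∩ B, i.e., there exist C > 0 and q ∈ (0,1) with ‖b_k − b*‖ ≤ C·q^k for all k. -/
open Set Metric Filter Topology RealInnerProductSpace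
open scoped ENNReal

variable {E : Type*} [NormedAddCommGroup E] [InnerProductSpace ℝ E]

/-- The (possibly set-valued) metric projection onto a set `S`. -/
noncomputable def projSet (S : Set E) (x : E) : Set E :=
  {s | s ∈ S ∧ ‖x - s‖ = Metric.infDist x S}

/-- `B` is `σ`-Hölder regular with respect to `A` at `bs` with constant `c`. -/
def HolderRegular (A B : Set E) (bs : E) (σ c : ℝ) : Prop :=
  ∃ U ∈ nhds bs, ∀ a' ∈ A ∩ U, ∀ b' ∈ projSet B a' ∩ U, ∀ b ∈ B,
    ‖b - a'‖ ≤ (1 + c) * ‖a' - b'‖ → a' ∈ projSet A b →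
    ⟪a' - b', b - b'⟫ ≤ Real.sqrt c * ‖a' - b'‖ ^ (σ + 1) * ‖b - b'‖

set_option maxHeartbeats 1000000 in
lemma key_ineq {E : Type*} [NormedAddCommGroup E] [InnerProductSpace ℝ E]
    (b a' b' : E) (γ c : ℝ) (hγ2 : γ < 2) (hc : 0 < c) (hcγ : c < γ / 2)
    (hsr : ‖a' - b'‖ ≤ ‖b - a'‖)
    (hsep : ⟪b - a', b' - a'⟫ ≤ (1 - γ) * ‖b - a'‖ * ‖b' - a'‖)
    (hhold : ‖b - a'‖ ≤ (1 + c) * ‖a' - b'‖ →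
      ⟪a' - b', b - b'⟫ ≤ Real.sqrt c * ‖a' - b'‖ * ‖b - b'‖) :
    ‖a' - b'‖ ≤ max (1/(1+c)) (1 - (γ - 2*c)^2/9) * ‖b - a'‖ := by
  set r := ‖b - a'‖ with hrdef
  set s := ‖a' - b'‖ with hsdef
  set u := ‖b - b'‖ with hudef
  set q := max (1/(1+c)) (1 - (γ - 2*c)^2/9) with hqdef
  have hc1 : c < 1 := by linarith
  have hr0 : (0:ℝ) ≤ r := norm_nonneg _
  have hs0 : (0:ℝ) ≤ s := norm_nonneg _
  have hu0 : (0:ℝ) ≤ u := norm_nonneg _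
  have hq0 : 0 < q := lt_of_lt_of_le (by positivity) (le_max_left _ _)
  rcases le_or_gt r ((1+c)*s) with hcase | hcase
  · -- Hölder regularity applies
    have hH := hhold hcase
    by_contra hcon
    push_neg at hcon
    have hrpos : 0 < r := by
      rcases hr0.lt_or_eq with h | h
      · exact h
      · exfalso
        have h0 : q * r = 0 := by rw [← h]; ring
        linarith only [hcon, h0, hsr, h]
    have hspos : 0 < s := lt_trans (mul_pos hq0 hrpos) hcon
    have hrev : ‖b' - a'‖ = s := by rw [hsdef]; exact norm_sub_rev _ _
    have e1 : u^2 = r^2 - 2*⟪b-a', b'-a'⟫ + s^2 := by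
      have h := norm_sub_sq_real (b - a') (b' - a')
      have heq : (b - a') - (b' - a') = b - b' := by abel
      rw [heq] at h
      rw [hudef, h, hrev]
    have e2 : r^2 = u^2 - 2*⟪a'-b', b-b'⟫ + s^2 := by
      have h := norm_sub_sq_real (b - b') (a' - b')
      have heq : (b - b') - (a' - b') = b - a' := by abel
      rw [heq] at h
      rw [hrdef, h, real_inner_comm]
    rw [hrev] at hsep
    have i1 : r^2 + s^2 - 2*(1-γ)*r*s ≤ u^2 := by linarith only [hsep, e1]
    have i2 : u^2 + s^2 - 2*(Real.sqrt c)*s*u ≤ r^2 := by linarith only [hH, e2]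
    have hsc0 : (0:ℝ) ≤ Real.sqrt c := Real.sqrt_nonneg c
    have hsc2 : Real.sqrt c ^ 2 = c := Real.sq_sqrt hc.le
    have hsc1 : Real.sqrt c ≤ 1 := Real.sqrt_le_one.2 hc1.le
    have A1 : s - (1-γ)*r ≤ Real.sqrt c * u := by
      nlinarith only [i1, i2, hspos]
    set X := r^2 - (1-c)*s^2 with hXdef
    have A2 : (u - Real.sqrt c * s)^2 ≤ X := by
      have hcs : Real.sqrt c ^ 2 * s^2 = c * s^2 := by rw [hsc2]
      have hexp : (u - Real.sqrt c * s)^2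
          = u^2 - 2*(Real.sqrt c)*s*u + Real.sqrt c ^2 * s^2 := by ring
      rw [hexp, hcs, hXdef]
      linarith only [i2]
    have hX0 : (0:ℝ) ≤ X := le_trans (sq_nonneg _) A2
    have A3 : u - Real.sqrt c * s ≤ Real.sqrt X := by
      have h := Real.sqrt_le_sqrt A2
      rw [Real.sqrt_sq_eq_abs] at h
      exact le_trans (le_abs_self _) h
    have A4 : (1-c)*s - (1-γ)*r ≤ Real.sqrt c * Real.sqrt X := by
      have h := mul_le_mul_of_nonneg_left A3 hsc0
      have heq : Real.sqrt c * (u - Real.sqrt c * s) = Real.sqrt c * u - c * s := by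
        linear_combination (-s) * hsc2
      rw [heq] at h
      linarith only [A1, h]
    set δ := γ - 2*c with hδdef
    have hδ : 0 < δ := by rw [hδdef]; linarith
    have hδ2 : δ < 2 := by rw [hδdef]; linarith
    have he : r - s < δ^2/9 * r := by
      have hq' : (1 - δ^2/9) * r ≤ q * r :=
        mul_le_mul_of_nonneg_right (le_max_right _ _) hr0
      linarith only [hcon, hq']
    set Y := 2*r*(r-s) with hYdef
    have hY0 : (0:ℝ) ≤ Y := by
      rw [hYdef]
      exact mul_nonneg (by linarith only [hr0]) (by linarith only [hsr])
    have hXle : X ≤ Y + c*r^2 := by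
      have h1 : (0:ℝ) ≤ r^2 - s^2 := by nlinarith only [hsr, hs0]
      have h2 : (0:ℝ) ≤ c * (r^2 - s^2) := mul_nonneg hc.le h1
      rw [hXdef, hYdef]
      linarith only [sq_nonneg (r-s), h2]
    have hsY : Real.sqrt Y ≤ δ*r/2 := by
      have h0 := mul_le_mul_of_nonneg_left he.le (by linarith only [hr0] : (0:ℝ) ≤ 2*r)
      have h1 : Y ≤ (δ*r/2)^2 := by
        rw [hYdef]
        nlinarith only [h0, sq_nonneg (δ*r)]
      have h2 := Real.sqrt_le_sqrt h1
      rwa [Real.sqrt_sq (by positivity)] at h2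
    have hsX : Real.sqrt X ≤ Real.sqrt Y + Real.sqrt c * r := by
      have hsqY : Real.sqrt Y ^ 2 = Y := Real.sq_sqrt hY0
      have hcr : Real.sqrt c ^ 2 * r^2 = c * r^2 := by rw [hsc2]
      have cross : (0:ℝ) ≤ Real.sqrt Y * (Real.sqrt c * r) := by positivity
      have h1 : X ≤ (Real.sqrt Y + Real.sqrt c * r)^2 := by
        have hexp : (Real.sqrt Y + Real.sqrt c * r)^2
            = Real.sqrt Y ^2 + 2*(Real.sqrt Y * (Real.sqrt c * r)) + Real.sqrt c^2 * r^2 := by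
          ring
        rw [hexp, hsqY, hcr]
        linarith only [hXle, cross]
      have h2 := Real.sqrt_le_sqrt h1
      rwa [Real.sqrt_sq (by positivity)] at h2
    have hfin : Real.sqrt c * Real.sqrt X ≤ Real.sqrt Y + c * r := by
      have h := mul_le_mul_of_nonneg_left hsX hsc0
      have h2 : Real.sqrt c * Real.sqrt Y ≤ Real.sqrt Y := by
        have := mul_le_mul_of_nonneg_right hsc1 (Real.sqrt_nonneg Y)
        rwa [one_mul] at this
      have h3 : Real.sqrt c * (Real.sqrt Y + Real.sqrt c * r)
          = Real.sqrt c * Real.sqrt Y + c * r := by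
        linear_combination r * hsc2
      rw [h3] at h
      linarith only [h, h2]
    have hsgt : (1 - δ^2/9) * r < s := by linarith only [he]
    have h5 : (1-c)*((1 - δ^2/9)*r) < (1-c)*s :=
      mul_lt_mul_of_pos_left hsgt (by linarith only [hc1])
    have h6 : (1-c)*((1 - δ^2/9)*r) - (1-γ)*r < δ*r/2 + c*r := by
      linarith only [A4, hfin, hsY, h5]
    have hγr : γ*r = δ*r + 2*(c*r) := by rw [hδdef]; ring
    have p1 : 0 < δ*r := mul_pos hδ hrpos
    have p2 : (0:ℝ) ≤ c*(δ^2*r) := by positivity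
    have p3 : (0:ℝ) ≤ (2-δ)*(δ*r) :=
      mul_nonneg (by linarith only [hδ2]) p1.le
    clear_value q X Y δ r s u
    nlinarith only [h6, hγr, p1, p2, p3]
  · have h1 : s ≤ 1/(1+c) * r := by
      rw [div_mul_eq_mul_div, le_div_iff₀ (by linarith)]
      nlinarith only [hcase]
    calc s ≤ 1/(1+c) * r := h1
      _ ≤ q * r := mul_le_mul_of_nonneg_right (le_max_left _ _) hr0

set_option maxHeartbeats 1000000 in
theorem stmt16 {n : ℕ} (A B : Set (EuclideanSpace ℝ (Fin n)))
    (hAne : A.Nonempty) (hBne : B.Nonempty) (hAc : IsClosed A) (hBc : IsClosed B)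
    (xs : EuclideanSpace ℝ (Fin n)) (hxs : xs ∈ A ∩ B)
    (γ c : ℝ) (hγ : γ ∈ Set.Ioo (0:ℝ) 2) (hc : 0 < c) (hcγ : c < γ / 2)
    (U : Set (EuclideanSpace ℝ (Fin n))) (hU : U ∈ nhds xs)
    (hsep₁ : ∀ b a' b' : EuclideanSpace ℝ (Fin n), b ∈ B → a' ∈ projSet A b →
      b' ∈ projSet B a' → b ∈ U → a' ∈ U → b' ∈ U →
      ⟪b - a', b' - a'⟫ ≤ (1 - γ) * ‖b - a'‖ * ‖b' - a'‖)
    (hsep₂ : ∀ a b a' : EuclideanSpace ℝ (Fin n), a ∈ A → b ∈ projSet B a →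
      a' ∈ projSet A b → a ∈ U → b ∈ U → a' ∈ U →
      ⟪a - b, a' - b⟫ ≤ (1 - γ) * ‖a - b‖ * ‖a' - b‖)
    (hreg : HolderRegular A B xs 0 c) :
    ∃ V ∈ nhds xs, ∀ a b : ℕ → EuclideanSpace ℝ (Fin n),
      (∀ k, b k ∈ projSet B (a k)) → (∀ k, a (k + 1) ∈ projSet A (b k)) →
      (∃ k, a k ∈ V ∨ b k ∈ V) →
      ∃ p ∈ A ∩ B, Filter.Tendsto b Filter.atTop (nhds p) ∧
        ∃ C : ℝ, 0 < C ∧ ∃ q : ℝ, 0 < q ∧ q < 1 ∧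
          ∀ k : ℕ, ‖b k - p‖ ≤ C * q ^ k := by
  obtain ⟨hxsA, hxsB⟩ := hxs
  obtain ⟨hγ1, hγ2⟩ := hγ
  obtain ⟨U', hU', hreg'⟩ := hreg
  obtain ⟨ρ, hρpos, hball⟩ := Metric.mem_nhds_iff.1 (Filter.inter_mem hU hU')
  set q : ℝ := max (1/(1+c)) (1 - (γ - 2*c)^2/9) with hqdef
  have hc1 : c < 1 := by linarith
  have hq0 : 0 < q := lt_of_lt_of_le (by positivity) (le_max_left _ _)
  have hq1 : q < 1 := by
    apply max_lt
    · rw [div_lt_one (by linarith)]; linarith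
    · have h0 : 0 < γ - 2*c := by linarith
      have h1 : 0 < (γ - 2*c)^2 := pow_pos h0 2
      linarith
  have h1q : 0 < 1 - q := by linarith
  set ρ' : ℝ := (1-q)*ρ/8 with hρ'def
  have hρ'pos : 0 < ρ' := by
    rw [hρ'def]; positivity
  have hρ'ρ : ρ' ≤ ρ/8 := by
    rw [hρ'def]
    have : (1-q)*ρ ≤ 1*ρ := mul_le_mul_of_nonneg_right (by linarith) hρpos.le
    linarith
  refine ⟨Metric.ball xs (ρ'/2), Metric.ball_mem_nhds _ (by positivity), ?_⟩
  rintro a b hb ha ⟨k₀, hk₀⟩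
  -- basic facts
  have hbB : ∀ k, b k ∈ B := fun k => (hb k).1
  have hbP : ∀ k, ‖a k - b k‖ = infDist (a k) B := fun k => (hb k).2
  have haA : ∀ k, a (k+1) ∈ A := fun k => (ha k).1
  have haP : ∀ k, ‖b k - a (k+1)‖ = infDist (b k) A := fun k => (ha k).2
  -- b k₀ is close to xs
  have hbk₀ : ‖b k₀ - xs‖ < ρ' := by
    rcases hk₀ with hk | hk
    · have h1 : infDist (a k₀) B ≤ dist (a k₀) xs := infDist_le_dist_of_mem hxsB
      have h2 : dist (a k₀) xs < ρ'/2 := Metric.mem_ball.1 hk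
      have h3 : ‖b k₀ - xs‖ ≤ ‖b k₀ - a k₀‖ + ‖a k₀ - xs‖ := by
        have := dist_triangle (b k₀) (a k₀) xs
        simpa [dist_eq_norm] using this
      rw [dist_eq_norm] at h2
      have h4 : ‖b k₀ - a k₀‖ = ‖a k₀ - b k₀‖ := norm_sub_rev _ _
      rw [dist_eq_norm] at h1
      rw [h4, hbP k₀] at h3
      linarith
    · have := Metric.mem_ball.1 hk
      rw [dist_eq_norm] at this
      linarith
  -- the distance function
  set r : ℕ → ℝ := fun j => infDist (b (k₀+j)) A with hrdef
  have hr0le : r 0 ≤ ρ' := by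
    have h1 : infDist (b (k₀+0)) A ≤ dist (b (k₀+0)) xs := infDist_le_dist_of_mem hxsA
    rw [dist_eq_norm] at h1
    have h2 : ‖b (k₀+0) - xs‖ < ρ' := by simpa using hbk₀
    simp only [hrdef]
    linarith
  have hrnn : ∀ j, 0 ≤ r j := fun j => infDist_nonneg
  have hreq : ∀ j, ‖b (k₀+j) - a (k₀+j+1)‖ = r j := fun j => haP (k₀+j)
  -- s_j+1 ≤ r_j always
  have hs_le_r : ∀ j, ‖a (k₀+j+1) - b (k₀+j+1)‖ ≤ r j := by
    intro j
    rw [hbP (k₀+j+1)]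
    have h1 : infDist (a (k₀+j+1)) B ≤ dist (a (k₀+j+1)) (b (k₀+j)) :=
      infDist_le_dist_of_mem (hbB (k₀+j))
    rw [dist_eq_norm, ← norm_sub_rev, hreq j] at h1
    exact h1
  set K : ℝ := 2*(r 0)/(1-q) with hKdef
  have hKnn : 0 ≤ K := by
    rw [hKdef]
    apply div_nonneg _ h1q.le
    linarith [hrnn 0]
  have hKρ : K ≤ ρ/4 := by
    rw [hKdef]
    rw [div_le_iff₀ h1q]
    have : r 0 ≤ (1-q)*ρ/8 := hr0le
    nlinarith [hρpos, h1q]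
  -- main induction
  have main : ∀ j : ℕ, ‖b (k₀+j) - xs‖ ≤ ρ' + K * (1 - q^j) ∧ r j ≤ q^j * r 0 := by
    intro j
    induction j with
    | zero =>
      constructor
      · simp only [Nat.add_zero, pow_zero]
        nlinarith [hbk₀.le, hKnn]
      · simp
    | succ j ih =>
      obtain ⟨ihb, ihr⟩ := ih
      have hqj1 : q^j ≤ 1 := pow_le_one₀ hq0.le hq1.le
      have hqjnn : 0 ≤ q^j := pow_nonneg hq0.le j
      have hbj_bound : ‖b (k₀+j) - xs‖ ≤ 3*ρ/8 := by
        have h1 : K * (1 - q^j) ≤ K := by nlinarith [hKnn]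
        have h2 : K ≤ ρ/4 := hKρ
        linarith [ihb, hρ'ρ]
      have hrjρ : r j ≤ ρ' := by
        calc r j ≤ q^j * r 0 := ihr
          _ ≤ 1 * r 0 := mul_le_mul_of_nonneg_right hqj1 (hrnn 0)
          _ = r 0 := one_mul _
          _ ≤ ρ' := hr0le
      have haj_bound : ‖a (k₀+j+1) - xs‖ ≤ ρ/2 := by
        have h1 : ‖a (k₀+j+1) - xs‖ ≤ ‖a (k₀+j+1) - b (k₀+j)‖ + ‖b (k₀+j) - xs‖ := by
          have := dist_triangle (a (k₀+j+1)) (b (k₀+j)) xs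
          simpa [dist_eq_norm] using this
        have h2 : ‖a (k₀+j+1) - b (k₀+j)‖ = r j := by rw [norm_sub_rev]; exact hreq j
        rw [h2] at h1
        have := hρ'ρ
        linarith [h1, hrjρ, hbj_bound]
      have hbj1_bound : ‖b (k₀+j+1) - xs‖ ≤ 5*ρ/8 := by
        have h1 : ‖b (k₀+j+1) - xs‖ ≤ ‖b (k₀+j+1) - a (k₀+j+1)‖ + ‖a (k₀+j+1) - xs‖ := by
          have := dist_triangle (b (k₀+j+1)) (a (k₀+j+1)) xs
          simpa [dist_eq_norm] using this
        have h2 : ‖b (k₀+j+1) - a (k₀+j+1)‖ = ‖a (k₀+j+1) - b (k₀+j+1)‖ := norm_sub_rev _ _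
        have h3 := (hs_le_r j).trans hrjρ
        rw [h2] at h1
        linarith [h1, haj_bound, hρ'ρ]
      -- memberships
      have memU : ∀ x : EuclideanSpace ℝ (Fin n), ‖x - xs‖ < ρ → x ∈ U ∩ U' := by
        intro x hx
        exact hball (by rwa [Metric.mem_ball, dist_eq_norm])
      have mb : b (k₀+j) ∈ U ∩ U' := memU _ (by linarith [hbj_bound, hρpos])
      have ma : a (k₀+j+1) ∈ U ∩ U' := memU _ (by linarith [haj_bound, hρpos])
      have mb1 : b (k₀+j+1) ∈ U ∩ U' := memU _ (by linarith [hbj1_bound, hρpos])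
      -- apply the key inequality
      have hsep := hsep₁ (b (k₀+j)) (a (k₀+j+1)) (b (k₀+j+1)) (hbB _) (ha (k₀+j))
        (hb (k₀+j+1)) mb.1 ma.1 mb1.1
      have hhold : ‖b (k₀+j) - a (k₀+j+1)‖ ≤ (1 + c) * ‖a (k₀+j+1) - b (k₀+j+1)‖ →
          ⟪a (k₀+j+1) - b (k₀+j+1), b (k₀+j) - b (k₀+j+1)⟫ ≤
            Real.sqrt c * ‖a (k₀+j+1) - b (k₀+j+1)‖ * ‖b (k₀+j) - b (k₀+j+1)‖ := by
        intro hle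
        have h := hreg' (a (k₀+j+1)) ⟨haA (k₀+j), ma.2⟩ (b (k₀+j+1)) ⟨hb (k₀+j+1), mb1.2⟩
          (b (k₀+j)) (hbB _) hle (ha (k₀+j))
        rwa [zero_add, Real.rpow_one] at h
      have hkey := key_ineq (b (k₀+j)) (a (k₀+j+1)) (b (k₀+j+1)) γ c hγ2 hc hcγ
        ((hs_le_r j).trans (hreq j).symm.le) hsep hhold
      rw [hreq j] at hkey
      have hs_q : ‖a (k₀+j+1) - b (k₀+j+1)‖ ≤ q * r j := by
        rw [hqdef]; exact hkey
      have hrj1 : r (j+1) ≤ q * r j := by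
        have h1 : infDist (b (k₀+j+1)) A ≤ dist (b (k₀+j+1)) (a (k₀+j+1)) :=
          infDist_le_dist_of_mem (haA (k₀+j))
        rw [dist_eq_norm, norm_sub_rev] at h1
        exact h1.trans hs_q
      constructor
      · have h1 : ‖b (k₀+(j+1)) - xs‖ ≤ ‖b (k₀+j+1) - b (k₀+j)‖ + ‖b (k₀+j) - xs‖ := by
          have := dist_triangle (b (k₀+j+1)) (b (k₀+j)) xs
          rw [← Nat.add_assoc]
          simpa [dist_eq_norm] using this
        have h2 : ‖b (k₀+j+1) - b (k₀+j)‖ ≤ ‖b (k₀+j+1) - a (k₀+j+1)‖ + ‖a (k₀+j+1) - b (k₀+j)‖ := by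
          have := dist_triangle (b (k₀+j+1)) (a (k₀+j+1)) (b (k₀+j))
          simpa [dist_eq_norm] using this
        have h3 : ‖b (k₀+j+1) - a (k₀+j+1)‖ ≤ r j := by
          rw [norm_sub_rev]; exact hs_le_r j
        have h4 : ‖a (k₀+j+1) - b (k₀+j)‖ = r j := by rw [norm_sub_rev]; exact hreq j
        have h5 : ‖b (k₀+j+1) - b (k₀+j)‖ ≤ 2 * r j := by rw [h4] at h2; linarith
        have h6 : K * (1 - q^(j+1)) = K * (1 - q^j) + 2 * (q^j * r 0) := by
          rw [hKdef]; field_simp; ring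
        have h7 : 2 * r j ≤ 2 * (q^j * r 0) := by linarith [ihr]
        calc ‖b (k₀+(j+1)) - xs‖ ≤ ‖b (k₀+j+1) - b (k₀+j)‖ + ‖b (k₀+j) - xs‖ := h1
          _ ≤ 2 * (q^j * r 0) + (ρ' + K * (1 - q^j)) := by linarith [h5, h7, ihb]
          _ = ρ' + K * (1 - q^(j+1)) := by rw [h6]; ring
      · calc r (j+1) ≤ q * r j := hrj1
          _ ≤ q * (q^j * r 0) := mul_le_mul_of_nonneg_left ihr hq0.le
          _ = q^(j+1) * r 0 := by ring
  -- Cauchy and convergence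
  have hdist : ∀ j, dist (b (k₀+j)) (b (k₀+j+1)) ≤ (2 * r 0) * q^j := by
    intro j
    have h2 : dist (b (k₀+j)) (b (k₀+j+1)) ≤ ‖b (k₀+j) - a (k₀+j+1)‖ + ‖a (k₀+j+1) - b (k₀+j+1)‖ := by
      have := dist_triangle (b (k₀+j)) (a (k₀+j+1)) (b (k₀+j+1))
      simpa [dist_eq_norm] using this
    have h3 := hs_le_r j
    rw [hreq j] at h2
    have h4 := (main j).2
    have := hrnn j
    nlinarith [h2, h3, h4]
  have hcauchy : CauchySeq (fun j => b (k₀+j)) :=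
    cauchySeq_of_le_geometric q (2 * r 0) hq1 hdist
  obtain ⟨p, hp⟩ := cauchySeq_tendsto_of_complete hcauchy
  have hgeo : ∀ j, dist (b (k₀+j)) p ≤ (2 * r 0) * q^j / (1-q) :=
    dist_le_of_le_geometric_of_tendsto q (2 * r 0) hq1 hdist hp
  have hpB : p ∈ B := hBc.mem_of_tendsto hp (Filter.Eventually.of_forall fun j => hbB _)
  have hpA : p ∈ A := by
    have h1 : Tendsto (fun j => infDist (b (k₀+j)) A) atTop (𝓝 (infDist p A)) :=
      ((continuous_infDist_pt A).tendsto p).comp hp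
    have h2 : Tendsto (fun j => infDist (b (k₀+j)) A) atTop (𝓝 0) := by
      apply squeeze_zero (fun j => infDist_nonneg) (fun j => (main j).2)
      have := (tendsto_pow_atTop_nhds_zero_of_lt_one hq0.le hq1).mul_const (r 0)
      simpa using this
    have h3 : infDist p A = 0 := tendsto_nhds_unique h1 h2
    exact (hAc.mem_iff_infDist_zero hAne).2 h3
  have htend : Tendsto b atTop (𝓝 p) := by
    rw [← Filter.tendsto_add_atTop_iff_nat k₀]
    have : (fun j : ℕ => b (j + k₀)) = fun j : ℕ => b (k₀ + j) := by
      funext j; rw [Nat.add_comm]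
    rw [this]
    exact hp
  refine ⟨p, ⟨hpA, hpB⟩, htend, ?_⟩
  set T : ℝ := (2 * r 0/(1-q) + 1)/q^k₀ with hTdef
  have hqk₀ : 0 < q^k₀ := pow_pos hq0 _
  have hTpos : 0 < T := by
    rw [hTdef]; positivity
  set C : ℝ := (∑ m ∈ Finset.range k₀, ‖b m - p‖ / q^m) + T with hCdef
  have hsumnn : 0 ≤ ∑ m ∈ Finset.range k₀, ‖b m - p‖ / q^m :=
    Finset.sum_nonneg fun m _ => by positivity
  refine ⟨C, by rw [hCdef]; linarith, q, hq0, hq1, ?_⟩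
  intro k
  rcases lt_or_ge k k₀ with hk | hk
  · have h1 : ‖b k - p‖ / q^k ≤ ∑ m ∈ Finset.range k₀, ‖b m - p‖ / q^m :=
      Finset.single_le_sum (f := fun m => ‖b m - p‖ / q^m)
        (fun m _ => by positivity) (Finset.mem_range.2 hk)
    have h2 : ‖b k - p‖ / q^k ≤ C := by rw [hCdef]; linarith
    have h3 := mul_le_mul_of_nonneg_right h2 (pow_nonneg hq0.le k)
    rwa [div_mul_cancel₀ _ (pow_pos hq0 k).ne'] at h3
  · obtain ⟨j, rfl⟩ := Nat.exists_eq_add_of_le hk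
    have h1 : ‖b (k₀+j) - p‖ ≤ (2 * r 0) * q^j / (1-q) := by
      have := hgeo j
      rwa [dist_eq_norm] at this
    have h2 : T * q^(k₀+j) = (2 * r 0/(1-q) + 1) * q^j := by
      rw [hTdef, pow_add]
      field_simp
    have h3 : (2 * r 0) * q^j / (1-q) ≤ T * q^(k₀+j) := by
      rw [h2]
      have hqjnn : (0:ℝ) ≤ q^j := pow_nonneg hq0.le j
      have : (2 * r 0) * q^j / (1-q) = (2 * r 0/(1-q)) * q^j := by ring
      rw [this]
      nlinarith [hqjnn]
    have h4 : T * q^(k₀+j) ≤ C * q^(k₀+j) := by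
      apply mul_le_mul_of_nonneg_right _ (pow_nonneg hq0.le _)
      rw [hCdef]; linarith
    linarith [h1, h3, h4]
end

section
/- Let A and B be nonempty closed subsets of ℝⁿ that are intrinsically transversal at x* ∈ A ∩ B with constant κ ∈ (0,1]. Then there exists a neighborhood U of x* such that every sequence of alternating projections (a_k, b_k) between A and B that has at least one iterate in U converges R-linearly to a point b* ∈ A ∩ B, i.e., there exist C > 0 and q ∈ (0,1) with ‖b_k − b*‖ ≤ C·q^k for all k. -/
open Set Metric Filter Topology RealInnerProductSpace
open scoped ENNReal

variable {E : Type*} [NormedAddCommGroup E] [InnerProductSpace ℝ E]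

/-- The proximal normal cone to `S` at `s`. -/
def proxNormalCone (S : Set E) (s : E) : Set E :=
  {v | ∃ l : ℝ, 0 ≤ l ∧ ∃ u : E, v = l • u ∧ s ∈ projSet S (s + u)}

/-- `A` and `B` are intrinsically transversal at `x` with constant `κ`. -/
def IntrinsicallyTransversal (A B : Set E) (x : E) (κ : ℝ) : Prop :=
  ∃ U ∈ nhds x, ∀ a ∈ A ∩ U, a ∉ B → ∀ b ∈ B ∩ U, b ∉ A →
    κ ≤ max (Metric.infDist (‖a - b‖⁻¹ • (a - b)) (proxNormalCone B b))
            (Metric.infDist (‖a - b‖⁻¹ • (a - b)) (-(proxNormalCone A a)))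

lemma unitDiff (u v : E) (hu : u ≠ 0) (hv : v ≠ 0) :
    ‖‖u‖⁻¹ • u - ‖v‖⁻¹ • v‖ ≤ 2 * ‖u - v‖ / ‖v‖ := by
  have hun : (0:ℝ) < ‖u‖ := norm_pos_iff.mpr hu
  have hvn : (0:ℝ) < ‖v‖ := norm_pos_iff.mpr hv
  have h1 : ‖u‖⁻¹ • u - ‖v‖⁻¹ • v = ‖v‖⁻¹ • (u - v) + (‖u‖⁻¹ - ‖v‖⁻¹) • u := by
    rw [smul_sub, sub_smul]; abel
  rw [h1]
  have h2 : ‖‖v‖⁻¹ • (u - v)‖ = ‖u - v‖ / ‖v‖ := by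
    rw [norm_smul, norm_inv, norm_norm]; ring
  have h3 : ‖(‖u‖⁻¹ - ‖v‖⁻¹) • u‖ ≤ ‖u - v‖ / ‖v‖ := by
    rw [norm_smul, Real.norm_eq_abs]
    have he : |‖u‖⁻¹ - ‖v‖⁻¹| * ‖u‖ = |‖v‖ - ‖u‖| / ‖v‖ := by
      have : ‖u‖⁻¹ - ‖v‖⁻¹ = (‖v‖ - ‖u‖) / (‖u‖ * ‖v‖) := by field_simp
      rw [this, abs_div, abs_of_pos (by positivity : (0:ℝ) < ‖u‖ * ‖v‖)]
      field_simp
    rw [he]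
    have h4 : |‖v‖ - ‖u‖| ≤ ‖u - v‖ := by
      rw [abs_sub_comm]; exact abs_norm_sub_norm_le u v
    exact div_le_div_of_nonneg_right h4 hvn.le
  calc ‖‖v‖⁻¹ • (u - v) + (‖u‖⁻¹ - ‖v‖⁻¹) • u‖
      ≤ ‖‖v‖⁻¹ • (u - v)‖ + ‖(‖u‖⁻¹ - ‖v‖⁻¹) • u‖ := norm_add_le _ _
    _ ≤ ‖u - v‖ / ‖v‖ + ‖u - v‖ / ‖v‖ := by rw [h2]; linarith
    _ = 2 * ‖u - v‖ / ‖v‖ := by ring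

lemma cube_le (x : ℝ) (h0 : 0 < x) (h1 : x ≤ 1) : x^3 ≤ x := by
  nlinarith [sq_nonneg x, sq_nonneg (1-x)]

set_option maxHeartbeats 2000000 in
lemma key_contraction {n : ℕ} (A B : Set (EuclideanSpace ℝ (Fin n)))
    (hAc : IsClosed A) (hBc : IsClosed B)
    (xs : EuclideanSpace ℝ (Fin n)) (hxA : xs ∈ A) (hxB : xs ∈ B)
    (κ : ℝ) (hκ0 : 0 < κ) (hκ1 : κ ≤ 1)
    (U : Set (EuclideanSpace ℝ (Fin n))) (r : ℝ) (hr : 0 < r)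
    (hU : ball xs (2*r) ⊆ U)
    (htr : ∀ a ∈ A ∩ U, a ∉ B → ∀ b ∈ B ∩ U, b ∉ A →
      κ ≤ max (infDist (‖a - b‖⁻¹ • (a - b)) (proxNormalCone B b))
              (infDist (‖a - b‖⁻¹ • (a - b)) (-(proxNormalCone A a))))
    (a : EuclideanSpace ℝ (Fin n)) (haA : a ∈ A) (har : ‖a - xs‖ < r) (haB : a ∉ B)
    (b : EuclideanSpace ℝ (Fin n)) (hbB : b ∈ B) (hbproj : ‖a - b‖ = Metric.infDist a B)
    (hbA : b ∉ A) :
    Metric.infDist b A ≤ (1 - κ^3/100) * ‖a - b‖ := by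
  by_contra hcon
  push_neg at hcon
  set d : ℝ := ‖a - b‖ with hd
  have hBne : B.Nonempty := ⟨xs, hxB⟩
  have hane : a ≠ b := fun h => haB (h ▸ hbB)
  have hd0 : 0 < d := norm_pos_iff.mpr (sub_ne_zero.mpr hane)
  have hdr : d < r := by
    have h1 : Metric.infDist a B ≤ dist a xs := infDist_le_dist_of_mem hxB
    rw [dist_eq_norm] at h1
    calc d = Metric.infDist a B := hbproj
      _ ≤ ‖a - xs‖ := h1
      _ < r := har
  set κ3 : ℝ := κ^3 with hκ3
  have hκ3a : 0 < κ3 := by positivity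
  have hκ3b : κ3 ≤ κ := by rw [hκ3]; exact cube_le κ hκ0 hκ1
  set D : ℝ := Metric.infDist b A with hD
  have hDd : (1 - κ3/100) * d < D := hcon
  set c : ℝ := κ^2/10 with hc
  have hc0 : 0 < c := by positivity
  have hc1 : c ≤ 1/10 := by nlinarith
  set lam : ℝ := κ*d/10 with hlam
  have hlam0 : 0 < lam := by positivity
  set t : ℝ := κ*d/1000 with ht
  have ht0 : 0 < t := by positivity
  -- minimizer of F over K
  set K : Set (EuclideanSpace ℝ (Fin n)) := A ∩ Metric.closedBall a (2*lam) with hK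
  have hKcpt : IsCompact K := (isCompact_closedBall a (2*lam)).inter_left hAc
  have haK : a ∈ K := ⟨haA, mem_closedBall_self (by positivity)⟩
  set F : EuclideanSpace ℝ (Fin n) → ℝ := fun x => ‖x - b‖ + c * ‖x - a‖ with hF
  have hFc : ContinuousOn F K := by
    apply Continuous.continuousOn
    exact ((continuous_id.sub continuous_const).norm).add
      (continuous_const.mul ((continuous_id.sub continuous_const).norm))
  obtain ⟨x', hx'K, hmin⟩ := hKcpt.exists_isMinOn ⟨a, haK⟩ hFc
  have hx'A : x' ∈ A := hx'K.1
  set d' : ℝ := ‖x' - b‖ with hd'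
  have hd'D : D ≤ d' := by
    have h1 : Metric.infDist b A ≤ dist b x' := infDist_le_dist_of_mem hx'A
    rw [dist_eq_norm, norm_sub_rev] at h1
    exact h1
  have hFx' : d' + c * ‖x' - a‖ ≤ d := by
    have h1 := isMinOn_iff.mp hmin a haK
    simpa [F, hd] using h1
  have hd'low : (1 - κ3/100) * d < d' := lt_of_lt_of_le hDd hd'D
  have hd'0 : 0 < d' := by
    have p2 : 0 ≤ (1 - κ3) * d := mul_nonneg (by linarith : (0:ℝ) ≤ 1 - κ3) hd0.le
    linarith
  have hd'up : d' ≤ d := by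
    have : 0 ≤ c * ‖x' - a‖ := by positivity
    linarith
  have hclam : c * lam = κ3/100 * d := by rw [hc, hlam, hκ3]; ring
  have hx'a : ‖x' - a‖ ≤ lam := by
    have h1 : c * ‖x' - a‖ ≤ d - d' := by linarith
    have h2 : c * ‖x' - a‖ ≤ c * lam := by
      rw [hclam]
      have p2 : 0 ≤ (1 - κ3) * d := mul_nonneg (by linarith : (0:ℝ) ≤ 1 - κ3) hd0.le
      linarith
    exact le_of_mul_le_mul_left (by linarith) hc0
  -- local minimality
  have hloc : ∀ x ∈ A, ‖x - x'‖ ≤ lam → d' - c * ‖x - x'‖ ≤ ‖x - b‖ := by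
    intro x hxA hxx'
    have hxK : x ∈ K := by
      refine ⟨hxA, ?_⟩
      rw [mem_closedBall, dist_eq_norm]
      calc ‖x - a‖ ≤ ‖x - x'‖ + ‖x' - a‖ := norm_sub_le_norm_sub_add_norm_sub x x' a
        _ ≤ 2 * lam := by linarith
    have h1 := isMinOn_iff.mp hmin x hxK
    simp only [F] at h1
    have tri : ‖x - a‖ ≤ ‖x - x'‖ + ‖x' - a‖ := norm_sub_le_norm_sub_add_norm_sub x x' a
    have h2 : c * ‖x - a‖ ≤ c * (‖x - x'‖ + ‖x' - a‖) := mul_le_mul_of_nonneg_left tri hc0.le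
    have h3 : c * (‖x - x'‖ + ‖x' - a‖) = c * ‖x - x'‖ + c * ‖x' - a‖ := by ring
    linarith
  -- unit proximal direction
  have hbx'ne : b - x' ≠ 0 := by
    intro h
    have : ‖x' - b‖ = 0 := by rw [norm_sub_rev]; simpa using congrArg norm h
    rw [← hd'] at this; linarith
  have hnbx' : ‖b - x'‖ = d' := by rw [norm_sub_rev]
  set nv : EuclideanSpace ℝ (Fin n) := (d')⁻¹ • (b - x') with hnv
  have hnvn : ‖nv‖ = 1 := by
    rw [hnv, norm_smul, Real.norm_eq_abs, abs_of_pos (by positivity), hnbx']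
    field_simp
  set p : EuclideanSpace ℝ (Fin n) := x' + t • nv with hp
  have hpx' : ‖p - x'‖ = t := by
    rw [hp]
    simp only [add_sub_cancel_left]
    rw [norm_smul, Real.norm_eq_abs, abs_of_pos ht0, hnvn, mul_one]
  obtain ⟨w, hwA, hwdist⟩ := hAc.exists_infDist_eq_dist ⟨a, haA⟩ p
  have hwproj : ‖p - w‖ = Metric.infDist p A := by rw [hwdist, dist_eq_norm]
  have hpw : ‖p - w‖ ≤ t := by
    rw [hwproj]
    calc Metric.infDist p A ≤ dist p x' := infDist_le_dist_of_mem hx'A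
      _ = t := by rw [dist_eq_norm, hpx']
  set s : ℝ := ‖w - x'‖ with hs
  have hwx'2t : s ≤ 2*t := by
    rw [hs]
    calc ‖w - x'‖ ≤ ‖w - p‖ + ‖p - x'‖ := norm_sub_le_norm_sub_add_norm_sub w p x'
      _ ≤ t + t := by rw [norm_sub_rev, hpx']; linarith
      _ = 2*t := by ring
  have h2tlam : 2*t ≤ lam := by
    rw [ht, hlam]; linarith [mul_nonneg hκ0.le hd0.le]
  have hwK : ‖w - x'‖ ≤ lam := le_trans hwx'2t h2tlam
  have hlocw : d' - c * s ≤ ‖w - b‖ := hloc w hwA hwK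
  have hslam : s ≤ lam := hwK
  have hcs_nonneg : 0 ≤ d' - c * s := by
    have h1 : c * s ≤ c * lam := mul_le_mul_of_nonneg_left hslam hc0.le
    rw [hclam] at h1
    linarith [mul_nonneg (by linarith : (0:ℝ) ≤ 1 - κ3) hd0.le]
  -- key quadratic
  have hexp : ‖w - b‖^2 = s^2 - 2 * ⟪w - x', b - x'⟫ + d'^2 := by
    have h1 : w - b = (w - x') - (b - x') := by abel
    rw [h1, norm_sub_sq_real, hnbx', ← hs]
  have hsq : (d' - c*s)^2 ≤ ‖w - b‖^2 := by
    apply pow_le_pow_left₀ hcs_nonneg hlocw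
  have hquad : ⟪w - x', b - x'⟫ ≤ c * d' * s + s^2 / 2 := by
    rw [hexp] at hsq
    have expand : (d' - c*s)^2 = d'^2 - 2*(c*s*d') + (c*s)^2 := by ring
    rw [expand] at hsq
    linarith [sq_nonneg (c*s)]
  -- refined bound s ≤ 4 t c
  have hinner_pw : ‖p - w‖^2 = t^2 - 2 * (t * ((d')⁻¹ * ⟪b - x', w - x'⟫)) + s^2 := by
    have h1 : p - w = t • nv - (w - x') := by rw [hp]; abel
    rw [h1, norm_sub_sq_real, ← hs]
    have h2 : ‖t • nv‖ = t := by rw [norm_smul, Real.norm_eq_abs, abs_of_pos ht0, hnvn, mul_one]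
    rw [h2, hnv]
    have h3 : ⟪t • ((d')⁻¹ • (b - x')), w - x'⟫ = t * ((d')⁻¹ * ⟪b - x', w - x'⟫) := by
      rw [real_inner_smul_left, real_inner_smul_left]
    rw [h3]
  have hIcomm : ⟪b - x', w - x'⟫ = ⟪w - x', b - x'⟫ := real_inner_comm _ _
  have hds2 : d' * s^2 ≤ 2 * t * ⟪w - x', b - x'⟫ := by
    have h1 : ‖p - w‖^2 ≤ t^2 := by
      have := pow_le_pow_left₀ (norm_nonneg (p - w)) hpw 2
      simpa using this
    rw [hinner_pw, hIcomm] at h1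
    have h2 : s^2 ≤ 2 * (t * ((d')⁻¹ * ⟪w - x', b - x'⟫)) := by linarith
    have h3 : d' * s^2 ≤ d' * (2 * (t * ((d')⁻¹ * ⟪w - x', b - x'⟫))) :=
      mul_le_mul_of_nonneg_left h2 hd'0.le
    calc d' * s^2 ≤ d' * (2 * (t * ((d')⁻¹ * ⟪w - x', b - x'⟫))) := h3
      _ = 2 * t * ⟪w - x', b - x'⟫ := by field_simp
  have hs4tc : s ≤ 4 * t * c := by
    have h1 : d' * s^2 ≤ 2 * t * (c * d' * s + s^2/2) :=
      le_trans hds2 (mul_le_mul_of_nonneg_left hquad (by positivity : (0:ℝ) ≤ 2*t))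
    have htd2 : t ≤ d' / 2 := by
      rw [ht]
      have p1 : κ * d ≤ d := by
        have := mul_le_mul_of_nonneg_right hκ1 hd0.le
        linarith
      have p2 : 0 ≤ (1 - κ3) * d := mul_nonneg (by linarith : (0:ℝ) ≤ 1 - κ3) hd0.le
      linarith
    -- d' s^2 ≤ 2 t c d' s + t s^2  and t ≤ d'/2 ⇒ (d'/2) s^2 ≤ 2 t c d' s ⇒ s ≤ 4 t c
    by_cases hs0 : s ≤ 0
    · linarith [mul_pos (mul_pos (by norm_num : (0:ℝ) < 4) ht0) hc0]
    · push_neg at hs0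
      have h2 : (d'/2) * s^2 ≤ 2 * t * c * d' * s := by
        have p3 : t * s^2 ≤ (d'/2) * s^2 := mul_le_mul_of_nonneg_right htd2 (sq_nonneg s)
        linarith
      have h3 : (d'/2) * s ≤ 2 * t * c * d' := by
        calc (d'/2) * s = s⁻¹ * ((d'/2) * s^2) := by field_simp
          _ ≤ s⁻¹ * (2 * t * c * d' * s) := mul_le_mul_of_nonneg_left h2 (inv_pos.mpr hs0).le
          _ = 2 * t * c * d' := by field_simp
      by_contra hgt
      push_neg at hgt
      have h5 : (d'/2) * (4*t*c) < (d'/2) * s := by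
        exact mul_lt_mul_of_pos_left hgt (by linarith)
      linarith
  -- the proximal normal q at w
  set q : EuclideanSpace ℝ (Fin n) := p - w with hqdef
  have hqlow : t - s ≤ ‖q‖ := by
    have h1 : t = ‖p - x'‖ := hpx'.symm
    have h2 : ‖p - x'‖ ≤ ‖p - w‖ + ‖w - x'‖ := norm_sub_le_norm_sub_add_norm_sub p w x'
    rw [hqdef]; rw [← hs] at h2; linarith
  have h4tc_t : 4*t*c < t := by
    have : 4*c < 1 := by linarith
    calc 4*t*c = t*(4*c) := by ring
      _ < t*1 := by exact mul_lt_mul_of_pos_left this ht0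
      _ = t := by ring
  have hq0 : 0 < ‖q‖ := by linarith
  have hqne : q ≠ 0 := norm_pos_iff.mp hq0
  have hqtn : ‖q - t • nv‖ = s := by
    have h1 : q - t • nv = x' - w := by rw [hqdef, hp]; abel
    rw [h1, norm_sub_rev, ← hs]
  have htnv : ‖t • nv‖ = t := by
    rw [norm_smul, Real.norm_eq_abs, abs_of_pos ht0, hnvn, mul_one]
  have htnvne : t • nv ≠ 0 := by
    intro h; rw [h, norm_zero] at htnv; linarith
  have hunit_tnv : ‖t • nv‖⁻¹ • (t • nv) = nv := by
    rw [htnv, smul_smul, inv_mul_cancel₀ (ne_of_gt ht0), one_smul]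
  have hqhat : ‖‖q‖⁻¹ • q - nv‖ ≤ 8*c := by
    have h1 := unitDiff q (t • nv) hqne htnvne
    rw [hunit_tnv, hqtn, htnv] at h1
    calc ‖‖q‖⁻¹ • q - nv‖ ≤ 2*s/t := h1
      _ ≤ 2*(4*t*c)/t := by
          apply div_le_div_of_nonneg_right _ ht0.le
          linarith
      _ = 8*c := by field_simp; ring
  -- location facts
  have hwb_lb : d' - s ≤ ‖w - b‖ := by
    have h1 : ‖x' - b‖ ≤ ‖x' - w‖ + ‖w - b‖ := norm_sub_le_norm_sub_add_norm_sub x' w b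
    rw [norm_sub_rev x' w, ← hs, ← hd'] at h1; linarith
  have hsd : s < d/1000 := by
    have : 4*t*c < d/1000 := by
      rw [ht, hc]
      have p2 : κ^3 * d ≤ 1 * d :=
        mul_le_mul_of_nonneg_right (le_trans (cube_le κ hκ0 hκ1) hκ1) hd0.le
      linarith
    linarith [hs4tc]
  have hd'd99 : (99:ℝ)/100 * d ≤ d' := by
    have p2 : 0 ≤ (1 - κ3) * d := mul_nonneg (by linarith : (0:ℝ) ≤ 1 - κ3) hd0.le
    linarith
  have hwb_pos : 0 < ‖w - b‖ := by linarith
  have hwbne : w - b ≠ 0 := norm_pos_iff.mp hwb_pos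
  have hwa : ‖w - a‖ ≤ s + lam := by
    calc ‖w - a‖ ≤ ‖w - x'‖ + ‖x' - a‖ := norm_sub_le_norm_sub_add_norm_sub w x' a
      _ ≤ s + lam := by rw [← hs]; linarith
  have hlamd : lam ≤ d/10 := by
    rw [hlam]
    have p1 : κ * d ≤ 1 * d := mul_le_mul_of_nonneg_right hκ1 hd0.le
    linarith
  have hwaltd : ‖w - a‖ < d := by linarith
  -- w ∉ B
  have hwB : w ∉ B := by
    intro hwB
    have h1 : Metric.infDist a B ≤ Metric.infDist w B + dist a w := infDist_le_infDist_add_dist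
    have h2 : Metric.infDist w B = 0 := by rw [← (hBc.mem_iff_infDist_zero hBne).mp hwB]
    rw [h2, zero_add, dist_eq_norm, ← norm_sub_rev w a] at h1
    rw [← hbproj] at h1
    linarith
  -- w ∈ U
  have hwU : w ∈ U := by
    apply hU
    rw [mem_ball, dist_eq_norm]
    calc ‖w - xs‖ ≤ ‖w - a‖ + ‖a - xs‖ := norm_sub_le_norm_sub_add_norm_sub w a xs
      _ < d + r := by linarith
      _ < 2*r := by linarith
  have hbU : b ∈ U := by
    apply hU
    rw [mem_ball, dist_eq_norm]
    calc ‖b - xs‖ ≤ ‖b - a‖ + ‖a - xs‖ := norm_sub_le_norm_sub_add_norm_sub b a xs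
      _ < d + r := by rw [norm_sub_rev, ← hd]; linarith
      _ < 2*r := by linarith
  -- transversality at (w, b)
  have hT := htr w ⟨hwA, hwU⟩ hwB b ⟨hbB, hbU⟩ hbA
  set e : EuclideanSpace ℝ (Fin n) := ‖w - b‖⁻¹ • (w - b) with he
  -- B-side estimate
  have hBmem : (‖w - b‖⁻¹) • (a - b) ∈ proxNormalCone B b := by
    refine ⟨‖w - b‖⁻¹, inv_nonneg.mpr (norm_nonneg _), a - b, rfl, ?_⟩
    have : b + (a - b) = a := by abel
    rw [this]
    exact ⟨hbB, hbproj⟩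
  have hBside : Metric.infDist e (proxNormalCone B b) ≤ ‖w - a‖ / ‖w - b‖ := by
    calc Metric.infDist e (proxNormalCone B b) ≤ dist e (‖w - b‖⁻¹ • (a - b)) :=
          infDist_le_dist_of_mem hBmem
      _ = ‖w - a‖ / ‖w - b‖ := by
          rw [dist_eq_norm, he, ← smul_sub, norm_smul, Real.norm_eq_abs,
            abs_of_pos (inv_pos.mpr hwb_pos)]
          have : w - b - (a - b) = w - a := by abel
          rw [this]
          ring
  -- A-side estimate
  have hAmem : ‖q‖⁻¹ • q ∈ proxNormalCone A w := by
    refine ⟨‖q‖⁻¹, inv_nonneg.mpr (norm_nonneg _), q, rfl, ?_⟩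
    have : w + q = p := by rw [hqdef]; abel
    rw [this]
    exact ⟨hwA, hwproj⟩
  have hAneg : -(‖q‖⁻¹ • q) ∈ -(proxNormalCone A w) := Set.neg_mem_neg.mpr hAmem
  have hmnv : -nv = ‖x' - b‖⁻¹ • (x' - b) := by
    rw [hnv, ← hd', ← smul_neg, neg_sub]
  have hx'bne : x' - b ≠ 0 := by
    intro h
    have : ‖x' - b‖ = 0 := by rw [h, norm_zero]
    rw [← hd'] at this; linarith
  have heNv : ‖e - (-nv)‖ ≤ 2*s/d' := by
    rw [hmnv, he]
    have h1 := unitDiff (w - b) (x' - b) hwbne hx'bne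
    have h2 : ‖(w - b) - (x' - b)‖ = s := by
      have : (w - b) - (x' - b) = w - x' := by abel
      rw [this, ← hs]
    rw [h2, ← hd'] at h1
    exact h1
  have hAside : Metric.infDist e (-(proxNormalCone A w)) ≤ 2*s/d' + 8*c := by
    calc Metric.infDist e (-(proxNormalCone A w)) ≤ dist e (-(‖q‖⁻¹ • q)) :=
          infDist_le_dist_of_mem hAneg
      _ = ‖(e - (-nv)) + (‖q‖⁻¹ • q - nv)‖ := by rw [dist_eq_norm]; congr 1; abel
      _ ≤ ‖e - (-nv)‖ + ‖‖q‖⁻¹ • q - nv‖ := norm_add_le _ _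
      _ ≤ 2*s/d' + 8*c := by linarith [hqhat, heNv]
  -- numeric contradiction
  have h4tc_eq : 4*t*c = κ^3*d/2500 := by rw [ht, hc]; ring
  have hk3d : κ^3*d ≤ κ*d := by
    exact mul_le_mul_of_nonneg_right (cube_le κ hκ0 hκ1) hd0.le
  have hskd : s ≤ κ*d/2500 := by
    rw [h4tc_eq] at hs4tc
    linarith
  have hkd0 : 0 < κ*d := mul_pos hκ0 hd0
  have hwb_lb2 : (99:ℝ)/100*d - d/1000 ≤ ‖w - b‖ := by linarith
  have hBnum : ‖w - a‖ / ‖w - b‖ < κ := by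
    rw [div_lt_iff₀ hwb_pos]
    have h1 : ‖w - a‖ ≤ κ*d/2500 + κ*d/10 := by linarith
    have h4 : κ * ((99:ℝ)/100*d - d/1000) ≤ κ * ‖w - b‖ :=
      mul_le_mul_of_nonneg_left hwb_lb2 hκ0.le
    have h5 : κ * ((99:ℝ)/100*d - d/1000) = (989:ℝ)/1000 * (κ*d) := by ring
    linarith
  have hAnum : 2*s/d' + 8*c < κ := by
    have h1 : 2*s/d' ≤ κ/1000 := by
      rw [div_le_iff₀ hd'0]
      have p1 : κ * ((99:ℝ)/100*d) ≤ κ * d' := mul_le_mul_of_nonneg_left hd'd99 hκ0.le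
      have p2 : 2*s ≤ κ^3*d/1250 := by linarith [hs4tc, h4tc_eq]
      have p3 : κ/1000 * d' = (κ * d')/1000 := by ring
      linarith
    have h2 : 8*c ≤ (8:ℝ)/10 * κ := by
      rw [hc]
      have p1 : κ*κ ≤ 1*κ := mul_le_mul_of_nonneg_right hκ1 hκ0.le
      linarith
    linarith
  rcases le_max_iff.mp hT with h | h
  · linarith
  · linarith

lemma step_contraction {n : ℕ} (A B : Set (EuclideanSpace ℝ (Fin n)))
    (hAc : IsClosed A) (hBc : IsClosed B)
    (xs : EuclideanSpace ℝ (Fin n)) (hxA : xs ∈ A) (hxB : xs ∈ B)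
    (κ : ℝ) (hκ0 : 0 < κ) (hκ1 : κ ≤ 1)
    (U : Set (EuclideanSpace ℝ (Fin n))) (r : ℝ) (hr : 0 < r)
    (hU : ball xs (2*r) ⊆ U)
    (htr : ∀ a ∈ A ∩ U, a ∉ B → ∀ b ∈ B ∩ U, b ∉ A →
      κ ≤ max (infDist (‖a - b‖⁻¹ • (a - b)) (proxNormalCone B b))
              (infDist (‖a - b‖⁻¹ • (a - b)) (-(proxNormalCone A a))))
    (a : EuclideanSpace ℝ (Fin n)) (haA : a ∈ A) (har : ‖a - xs‖ < r)
    (b : EuclideanSpace ℝ (Fin n)) (hb : b ∈ projSet B a)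
    (a' : EuclideanSpace ℝ (Fin n)) (ha' : a' ∈ projSet A b) :
    ‖a' - b‖ ≤ (1 - κ^3/100) * ‖a - b‖ := by
  have hθ0 : 0 ≤ 1 - κ^3/100 := by
    have := cube_le κ hκ0 hκ1
    linarith
  have ha'd : ‖a' - b‖ = Metric.infDist b A := by
    rw [norm_sub_rev]; exact ha'.2
  by_cases hbA : b ∈ A
  · have : Metric.infDist b A = 0 := (hAc.mem_iff_infDist_zero ⟨b, hbA⟩).mp hbA
    rw [ha'd, this]
    positivity
  · by_cases haB : a ∈ B
    · exfalso
      have h0 : Metric.infDist a B = 0 := (hBc.mem_iff_infDist_zero ⟨a, haB⟩).mp haB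
      have : ‖a - b‖ = 0 := by rw [hb.2, h0]
      have hab : a = b := sub_eq_zero.mp (norm_eq_zero.mp this)
      exact hbA (hab ▸ haA)
    · rw [ha'd]
      exact key_contraction A B hAc hBc xs hxA hxB κ hκ0 hκ1 U r hr hU htr
        a haA har haB b hb.1 hb.2 hbA

set_option maxHeartbeats 1000000 in
theorem stmt17 {n : ℕ} (A B : Set (EuclideanSpace ℝ (Fin n)))
    (hAne : A.Nonempty) (hBne : B.Nonempty) (hAc : IsClosed A) (hBc : IsClosed B)
    (xs : EuclideanSpace ℝ (Fin n)) (hxs : xs ∈ A ∩ B)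
    (κ : ℝ) (hκ : κ ∈ Set.Ioc (0:ℝ) 1)
    (hit : IntrinsicallyTransversal A B xs κ) :
    ∃ V ∈ nhds xs, ∀ a b : ℕ → EuclideanSpace ℝ (Fin n),
      (∀ k, b k ∈ projSet B (a k)) → (∀ k, a (k + 1) ∈ projSet A (b k)) →
      (∃ k, a k ∈ V ∨ b k ∈ V) →
      ∃ p ∈ A ∩ B, Filter.Tendsto b Filter.atTop (nhds p) ∧
        ∃ C : ℝ, 0 < C ∧ ∃ q : ℝ, 0 < q ∧ q < 1 ∧
          ∀ k : ℕ, ‖b k - p‖ ≤ C * q ^ k := by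
  obtain ⟨hxsA, hxsB⟩ := hxs
  obtain ⟨hκ0, hκ1⟩ := hκ
  obtain ⟨U, hUnhds, htr⟩ := hit
  obtain ⟨r2, hr2, hball⟩ := Metric.mem_nhds_iff.mp hUnhds
  obtain ⟨θ, hθdef⟩ : ∃ θ : ℝ, θ = 1 - κ^3/100 := ⟨_, rfl⟩
  have hκ3 : 0 < κ^3 := by positivity
  have hκ3le : κ^3 ≤ 1 := le_trans (cube_le κ hκ0 hκ1) hκ1
  have hθ0 : 0 < θ := by rw [hθdef]; linarith
  have hθlt1 : θ < 1 := by rw [hθdef]; linarith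
  have hθle1 : θ ≤ 1 := hθlt1.le
  have h1θ : 0 < 1 - θ := by linarith
  set r : ℝ := r2/2 with hrdef
  have hr : 0 < r := by positivity
  have hU : ball xs (2*r) ⊆ U := by
    have h2r : 2*r = r2 := by rw [hrdef]; ring
    rw [h2r]; exact hball
  obtain ⟨ρ, hρdef⟩ : ∃ ρ : ℝ, ρ = (1-θ)*r/100 := ⟨_, rfl⟩
  have hρ0 : 0 < ρ := by rw [hρdef]; positivity
  refine ⟨ball xs ρ, ball_mem_nhds _ hρ0, ?_⟩
  intro a b hbk hak hexists
  obtain ⟨k0, hk0⟩ := hexists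
  have hgap : ∀ k, ‖a k - b k‖ = Metric.infDist (a k) B := fun k => (hbk k).2
  have hbB : ∀ k, b k ∈ B := fun k => (hbk k).1
  have haA : ∀ k, a (k+1) ∈ A := fun k => (hak k).1
  have haproj : ∀ k, ‖b k - a (k+1)‖ = Metric.infDist (b k) A := fun k => (hak k).2
  set k1 : ℕ := k0 + 1 with hk1def
  -- b k0 is within 2ρ of xs
  have hbk0 : ‖b k0 - xs‖ < 2*ρ := by
    rcases hk0 with h | h
    · have h1 : ‖a k0 - xs‖ < ρ := by
        rw [← dist_eq_norm]; exact mem_ball.mp h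
      have h2 : ‖a k0 - b k0‖ ≤ ‖a k0 - xs‖ := by
        rw [hgap k0]
        have h3 := infDist_le_dist_of_mem (x := a k0) hxsB
        rw [dist_eq_norm] at h3; exact h3
      calc ‖b k0 - xs‖ ≤ ‖b k0 - a k0‖ + ‖a k0 - xs‖ :=
            norm_sub_le_norm_sub_add_norm_sub _ _ _
        _ = ‖a k0 - b k0‖ + ‖a k0 - xs‖ := by rw [norm_sub_rev]
        _ < 2*ρ := by linarith
    · have h1 : ‖b k0 - xs‖ < ρ := by rw [← dist_eq_norm]; exact mem_ball.mp h
      linarith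
  have hak1 : ‖a k1 - xs‖ < 4*ρ := by
    have h1 : ‖b k0 - a k1‖ ≤ ‖b k0 - xs‖ := by
      rw [haproj k0]
      have h3 := infDist_le_dist_of_mem (x := b k0) hxsA
      rw [dist_eq_norm] at h3; exact h3
    calc ‖a k1 - xs‖ ≤ ‖a k1 - b k0‖ + ‖b k0 - xs‖ :=
          norm_sub_le_norm_sub_add_norm_sub _ _ _
      _ = ‖b k0 - a k1‖ + ‖b k0 - xs‖ := by rw [norm_sub_rev]
      _ < 2*ρ + 2*ρ := by linarith
      _ = 4*ρ := by ring
  have haAk : ∀ j, a (k1 + j) ∈ A := by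
    intro j
    have he : k1 + j = (k0 + j) + 1 := by omega
    rw [he]; exact haA (k0 + j)
  have hρr : ρ ≤ r/100 := by
    rw [hρdef]
    have h1 : (1-θ)*r ≤ 1*r := mul_le_mul_of_nonneg_right (by linarith) hr.le
    linarith
  have h8ρ : 8*ρ/(1-θ) = 8*r/100 := by
    rw [hρdef]; field_simp
  -- main induction
  have key : ∀ j : ℕ, ‖a (k1 + j) - xs‖ ≤ 4*ρ + 8*ρ*(1 - θ^j)/(1-θ) ∧
      ‖a (k1 + j) - b (k1 + j)‖ ≤ 4*ρ*θ^j := by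
    intro j
    induction j with
    | zero =>
      constructor
      · simp only [Nat.add_zero, pow_zero]
        have : 8*ρ*(1 - 1)/(1-θ) = 0 := by ring
        rw [this]
        linarith
      · simp only [Nat.add_zero, pow_zero, mul_one]
        have h2 : ‖a k1 - b k1‖ ≤ ‖a k1 - xs‖ := by
          rw [hgap k1]
          have h3 := infDist_le_dist_of_mem (x := a k1) hxsB
          rw [dist_eq_norm] at h3; exact h3
        linarith
    | succ j ih =>
      obtain ⟨ihpos, ihgap⟩ := ih
      have hθj0 : 0 ≤ θ^j := pow_nonneg hθ0.le j
      have hθj1 : θ^j ≤ 1 := pow_le_one₀ hθ0.le hθle1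
      have hfrac : 8*ρ*(1-θ^j)/(1-θ) ≤ 8*ρ/(1-θ) := by
        apply div_le_div_of_nonneg_right _ h1θ.le
        have : 8*ρ*(1-θ^j) ≤ 8*ρ*1 := by
          apply mul_le_mul_of_nonneg_left (by linarith) (by positivity)
        linarith
      have hposr : ‖a (k1 + j) - xs‖ < r := by
        have : 4*ρ + 8*ρ/(1-θ) < r := by
          rw [h8ρ]; linarith
        linarith
      have hstep := step_contraction A B hAc hBc xs hxsA hxsB κ hκ0 hκ1 U r hr hU htr
        (a (k1 + j)) (haAk j) hposr (b (k1 + j)) (hbk (k1 + j))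
        (a (k1 + j + 1)) (hak (k1 + j))
      rw [← hθdef] at hstep
      have hcross : ‖a (k1 + j + 1) - b (k1 + j)‖ ≤ 4*ρ*θ^(j+1) := by
        calc ‖a (k1 + j + 1) - b (k1 + j)‖ ≤ θ * ‖a (k1 + j) - b (k1 + j)‖ := hstep
          _ ≤ θ * (4*ρ*θ^j) := mul_le_mul_of_nonneg_left ihgap hθ0.le
          _ = 4*ρ*θ^(j+1) := by rw [pow_succ]; ring
      have hnewgap : ‖a (k1 + (j+1)) - b (k1 + (j+1))‖ ≤ 4*ρ*θ^(j+1) := by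
        have he : k1 + (j+1) = (k1 + j) + 1 := by omega
        rw [he, hgap ((k1 + j) + 1)]
        calc Metric.infDist (a (k1 + j + 1)) B ≤ dist (a (k1 + j + 1)) (b (k1 + j)) :=
              infDist_le_dist_of_mem (hbB (k1 + j))
          _ = ‖a (k1 + j + 1) - b (k1 + j)‖ := dist_eq_norm _ _
          _ ≤ 4*ρ*θ^(j+1) := hcross
      refine ⟨?_, hnewgap⟩
      have he : k1 + (j+1) = (k1 + j) + 1 := by omega
      have htri : ‖a (k1 + (j+1)) - xs‖ ≤
          ‖a (k1 + j + 1) - b (k1 + j)‖ + ‖b (k1 + j) - a (k1 + j)‖ + ‖a (k1 + j) - xs‖ := by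
        rw [he]
        calc ‖a (k1 + j + 1) - xs‖ ≤ ‖a (k1 + j + 1) - b (k1 + j)‖ + ‖b (k1 + j) - xs‖ :=
              norm_sub_le_norm_sub_add_norm_sub _ _ _
          _ ≤ ‖a (k1 + j + 1) - b (k1 + j)‖ + (‖b (k1 + j) - a (k1 + j)‖ + ‖a (k1 + j) - xs‖) := by
              linarith [norm_sub_le_norm_sub_add_norm_sub (b (k1 + j)) (a (k1 + j)) xs]
          _ = _ := by ring
      have hba : ‖b (k1 + j) - a (k1 + j)‖ ≤ 4*ρ*θ^j := by
        rw [norm_sub_rev]; exact ihgap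
      have halg : 4*ρ*θ^(j+1) + 4*ρ*θ^j + (4*ρ + 8*ρ*(1-θ^j)/(1-θ)) ≤
          4*ρ + 8*ρ*(1-θ^(j+1))/(1-θ) := by
        have e1 : 8*ρ*(1-θ^(j+1))/(1-θ) - 8*ρ*(1-θ^j)/(1-θ) = 8*ρ*θ^j := by
          rw [pow_succ]
          field_simp
          ring
        have e2 : 4*ρ*θ^(j+1) ≤ 4*ρ*θ^j := by
          rw [pow_succ]
          have : 4*ρ*(θ^j*θ) ≤ 4*ρ*(θ^j*1) :=
            mul_le_mul_of_nonneg_left (by nlinarith) (by positivity)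
          linarith [this]
        linarith
      linarith
  have hcrossAll : ∀ j : ℕ, ‖b (k1 + j) - a (k1 + j + 1)‖ ≤ 4*ρ*θ^(j+1) := by
    intro j
    obtain ⟨ihpos, ihgap⟩ := key j
    have hθj0 : 0 ≤ θ^j := pow_nonneg hθ0.le j
    have hθj1 : θ^j ≤ 1 := pow_le_one₀ hθ0.le hθle1
    have hfrac : 8*ρ*(1-θ^j)/(1-θ) ≤ 8*ρ/(1-θ) := by
      apply div_le_div_of_nonneg_right _ h1θ.le
      have : 8*ρ*(1-θ^j) ≤ 8*ρ*1 := by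
        apply mul_le_mul_of_nonneg_left (by linarith) (by positivity)
      linarith
    have hposr : ‖a (k1 + j) - xs‖ < r := by
      have : 4*ρ + 8*ρ/(1-θ) < r := by rw [h8ρ]; linarith
      linarith
    have hstep := step_contraction A B hAc hBc xs hxsA hxsB κ hκ0 hκ1 U r hr hU htr
      (a (k1 + j)) (haAk j) hposr (b (k1 + j)) (hbk (k1 + j))
      (a (k1 + j + 1)) (hak (k1 + j))
    rw [← hθdef] at hstep
    rw [norm_sub_rev]
    calc ‖a (k1 + j + 1) - b (k1 + j)‖ ≤ θ * ‖a (k1 + j) - b (k1 + j)‖ := hstep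
      _ ≤ θ * (4*ρ*θ^j) := mul_le_mul_of_nonneg_left ihgap hθ0.le
      _ = 4*ρ*θ^(j+1) := by rw [pow_succ]; ring
  have hincr : ∀ j : ℕ, dist (b (k1 + j)) (b (k1 + (j+1))) ≤ (8*ρ) * θ^j := by
    intro j
    have h1 : ‖b (k1 + j) - a (k1 + j + 1)‖ ≤ 4*ρ*θ^(j+1) := hcrossAll j
    have h2 : ‖a (k1 + (j+1)) - b (k1 + (j+1))‖ ≤ 4*ρ*θ^(j+1) := (key (j+1)).2
    have hθj0 : 0 ≤ θ^j := pow_nonneg hθ0.le j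
    have hθsucc : θ^(j+1) ≤ θ^j := by
      rw [pow_succ]
      nlinarith
    calc dist (b (k1 + j)) (b (k1 + (j+1)))
        = ‖b (k1 + j) - b (k1 + (j+1))‖ := dist_eq_norm _ _
      _ ≤ ‖b (k1 + j) - a (k1 + (j+1))‖ + ‖a (k1 + (j+1)) - b (k1 + (j+1))‖ :=
          norm_sub_le_norm_sub_add_norm_sub _ _ _
      _ ≤ 4*ρ*θ^(j+1) + 4*ρ*θ^(j+1) := by
          have he2 : (k1 + (j+1)) = k1 + j + 1 := by omega
          rw [he2]
          exact add_le_add h1 (he2 ▸ h2)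
      _ ≤ (8*ρ) * θ^j := by nlinarith
  have hcauchy : CauchySeq (fun j => b (k1 + j)) :=
    cauchySeq_of_le_geometric θ (8*ρ) hθlt1 hincr
  obtain ⟨p, hp⟩ := cauchySeq_tendsto_of_complete hcauchy
  have hdistp : ∀ j, dist (b (k1 + j)) p ≤ 8*ρ*θ^j/(1-θ) :=
    dist_le_of_le_geometric_of_tendsto θ (8*ρ) hθlt1 hincr hp
  have hpB : p ∈ B := hBc.mem_of_tendsto hp (Filter.Eventually.of_forall fun j => hbB _)
  have hθpow : Filter.Tendsto (fun j : ℕ => θ^j) Filter.atTop (nhds 0) :=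
    tendsto_pow_atTop_nhds_zero_of_lt_one hθ0.le hθlt1
  have hpA : p ∈ A := by
    have hinf : ∀ j : ℕ, Metric.infDist p A ≤ (4*ρ*θ + 8*ρ/(1-θ))*θ^j := by
      intro j
      have h1 : Metric.infDist (b (k1 + j)) A ≤ 4*ρ*θ^(j+1) := by
        rw [← haproj (k1 + j)]
        exact hcrossAll j
      have h2 : Metric.infDist p A ≤ Metric.infDist (b (k1 + j)) A + dist p (b (k1 + j)) :=
        infDist_le_infDist_add_dist
      have h3 : dist p (b (k1 + j)) ≤ 8*ρ*θ^j/(1-θ) := by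
        rw [dist_comm]; exact hdistp j
      have h4 : 4*ρ*θ^(j+1) = (4*ρ*θ)*θ^j := by rw [pow_succ]; ring
      have h5 : 8*ρ*θ^j/(1-θ) = (8*ρ/(1-θ))*θ^j := by ring
      rw [h4] at h1
      rw [h5] at h3
      calc Metric.infDist p A ≤ Metric.infDist (b (k1 + j)) A + dist p (b (k1 + j)) := h2
        _ ≤ (4*ρ*θ)*θ^j + (8*ρ/(1-θ))*θ^j := add_le_add h1 h3
        _ = (4*ρ*θ + 8*ρ/(1-θ))*θ^j := by ring
    have hlim : Filter.Tendsto (fun j : ℕ => (4*ρ*θ + 8*ρ/(1-θ))*θ^j) Filter.atTop (nhds 0) := by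
      simpa using hθpow.const_mul (4*ρ*θ + 8*ρ/(1-θ))
    have h0 : Metric.infDist p A ≤ 0 := ge_of_tendsto' hlim hinf
    exact (hAc.mem_iff_infDist_zero hAne).mpr (le_antisymm h0 Metric.infDist_nonneg)
  have hbp : Filter.Tendsto b Filter.atTop (nhds p) := by
    have heq : (fun j : ℕ => b (j + k1)) = fun j => b (k1 + j) := by
      funext j; rw [Nat.add_comm]
    exact (tendsto_add_atTop_iff_nat k1).mp (by rw [heq]; exact hp)
  set M : ℝ := ∑ k ∈ Finset.range (k1+1), ‖b k - p‖ with hM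
  have hM0 : 0 ≤ M := Finset.sum_nonneg fun i _ => norm_nonneg _
  have hθk1 : 0 < θ^k1 := pow_pos hθ0 k1
  have hfracpos : 0 < 8*ρ/(1-θ) := by positivity
  set C : ℝ := (M + 8*ρ/(1-θ) + 1) * (θ^k1)⁻¹ with hC
  have hC0 : 0 < C := mul_pos (by linarith) (inv_pos.mpr hθk1)
  refine ⟨p, ⟨hpA, hpB⟩, hbp, C, hC0, θ, hθ0, hθlt1, ?_⟩
  intro k
  by_cases hk : k1 ≤ k
  · obtain ⟨j, rfl⟩ : ∃ j, k = k1 + j := ⟨k - k1, by omega⟩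
    have h1 : ‖b (k1 + j) - p‖ ≤ 8*ρ*θ^j/(1-θ) := by
      rw [← dist_eq_norm]; exact hdistp j
    have hC2 : C * θ^(k1+j) = (M + 8*ρ/(1-θ) + 1) * θ^j := by
      rw [hC, pow_add]
      field_simp
      ring
    have h2 : (8*ρ/(1-θ)) * θ^j ≤ (M + 8*ρ/(1-θ) + 1) * θ^j :=
      mul_le_mul_of_nonneg_right (by linarith) (pow_nonneg hθ0.le j)
    have h3 : 8*ρ*θ^j/(1-θ) = (8*ρ/(1-θ)) * θ^j := by ring
    rw [hC2]
    linarith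
  · push_neg at hk
    have h1 : ‖b k - p‖ ≤ M := by
      rw [hM]
      have hmem : k ∈ Finset.range (k1+1) := Finset.mem_range.mpr (by omega)
      exact Finset.single_le_sum (fun i _ => norm_nonneg (b i - p)) hmem
    have h2 : θ^k1 ≤ θ^k := pow_le_pow_of_le_one hθ0.le hθle1 (by omega)
    have h4 : (1:ℝ) ≤ (θ^k1)⁻¹ * θ^k := by
      have h5 := mul_le_mul_of_nonneg_left h2 (inv_pos.mpr hθk1).le
      rwa [inv_mul_cancel₀ (ne_of_gt hθk1)] at h5
    have h6 : M + 8*ρ/(1-θ) + 1 ≤ C * θ^k := by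
      have e : C * θ^k = (M + 8*ρ/(1-θ) + 1) * ((θ^k1)⁻¹ * θ^k) := by rw [hC]; ring
      rw [e]
      calc M + 8*ρ/(1-θ) + 1 = (M + 8*ρ/(1-θ) + 1)*1 := by ring
        _ ≤ (M + 8*ρ/(1-θ) + 1) * ((θ^k1)⁻¹ * θ^k) :=
            mul_le_mul_of_nonneg_left h4 (by linarith)
    linarith
end
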